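/- Let Pin ⊆ ℝ^d be a finite nonempty set, let A ⊆ ℝ^d be a finite nonempty set, and let ε ≥ 0. Suppose that for every unit vector v ∈ ℝ^d one has max_{a ∈ A} ⟨v, a⟩ ≥ max_{p ∈ Pin} ⟨v, p⟩ − ε (i.e., A hits the ε-shadow of every direction). Then every point of conv(Pin) is within distance ε of conv(A). -/

import Mathlib

open Metric
open scoped RealInnerProductSpace

theorem shadow_hitting_implies_approx
    (d : ℕ) (Pin A : Finset (EuclideanSpace ℝ (Fin d)))
    (hPin : Pin.Nonempty) (hA : A.Nonempty)
    (ε : ℝ) (hε : 0 ≤ ε)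
    (hhit : ∀ v : EuclideanSpace ℝ (Fin d), ‖v‖ = 1 →
      (Pin.sup' hPin fun p => ⟪v, p⟫) - ε ≤ A.sup' hA fun a => ⟪v, a⟫) :
    ∀ x ∈ convexHull ℝ (↑Pin : Set (EuclideanSpace ℝ (Fin d))),
      Metric.infDist x (convexHull ℝ (↑A : Set (EuclideanSpace ℝ (Fin d)))) ≤ ε := by
  intro x hx
  by_contra h
  push_neg at h
  set C : Set (EuclideanSpace ℝ (Fin d)) := convexHull ℝ (↑A) with hCdef
  have hCne : C.Nonempty := hA.to_set.convexHull
  have hCc : IsCompact C := A.finite_toSet.isCompact_convexHull ℝ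
  obtain ⟨y, hyC, hy⟩ := hCc.exists_infDist_eq_dist hCne x
  have hxy : ε < ‖x - y‖ := by rw [← dist_eq_norm, ← hy]; exact h
  have hpos : (0:ℝ) < ‖x - y‖ := lt_of_le_of_lt hε hxy
  have hmin : ‖x - y‖ = ⨅ w : C, ‖x - w‖ := by
    rw [← dist_eq_norm, ← hy, Metric.infDist_eq_iInf]
    simp [dist_eq_norm]
  have hvar : ∀ w ∈ C, ⟪x - y, w - y⟫ ≤ 0 :=
    (norm_eq_iInf_iff_real_inner_le_zero (convex_convexHull ℝ _) hyC).mp hmin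
  set v : EuclideanSpace ℝ (Fin d) := ‖x - y‖⁻¹ • (x - y) with hvdef
  have hvnorm : ‖v‖ = 1 := by
    rw [hvdef, norm_smul, norm_inv, norm_norm, inv_mul_cancel₀ (ne_of_gt hpos)]
  have hsupA : (A.sup' hA fun a => ⟪v, a⟫) ≤ ⟪v, y⟫ := by
    apply Finset.sup'_le
    intro a haA
    have haC : a ∈ C := subset_convexHull ℝ _ haA
    have := hvar a haC
    have h1 : ⟪v, a - y⟫ ≤ 0 := by
      rw [hvdef, real_inner_smul_left]
      exact mul_nonpos_of_nonneg_of_nonpos (inv_nonneg.mpr (norm_nonneg _)) this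
    rw [inner_sub_right] at h1
    linarith
  have hsupPin : ⟪v, x⟫ ≤ Pin.sup' hPin fun p => ⟪v, p⟫ := by
    have hsub : (↑Pin : Set (EuclideanSpace ℝ (Fin d))) ⊆
        {z | ⟪v, z⟫ ≤ Pin.sup' hPin fun p => ⟪v, p⟫} := by
      intro p hp
      exact Finset.le_sup' (fun p => ⟪v, p⟫) hp
    have hconv : Convex ℝ {z : EuclideanSpace ℝ (Fin d) |
        ⟪v, z⟫ ≤ Pin.sup' hPin fun p => ⟪v, p⟫} :=
      convex_halfSpace_le ⟨fun a b => inner_add_right _ _ _,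
        fun c a => real_inner_smul_right _ _ _⟩ _
    exact convexHull_min hsub hconv hx
  have hvx : ⟪v, x⟫ = ⟪v, y⟫ + ‖x - y‖ := by
    have : ⟪v, x - y⟫ = ‖x - y‖ := by
      rw [hvdef, real_inner_smul_left, real_inner_self_eq_norm_sq]
      field_simp
    rw [inner_sub_right] at this
    linarith
  have := hhit v hvnorm
  linarith
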